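/- Let Y be an ANR_{B0}-space and let Z be a compact metric space. Then the space C_{B0}(Z, Y), equipped with the compact-open topology and with the projection π(f) = π_Y(f(z)) (independent of z ∈ Z), is an ANR_{B0}-space. -/

import Mathlib

open Set Topology TopologicalSpace unitInterval

universe u

/-- `f` is a fiber preserving (f.p.) map from `(X, πX)` to `(Y, πY)` over `B0`. -/
def IsFPMap {B0 X Y : Type u} [TopologicalSpace B0] [TopologicalSpace X] [TopologicalSpace Y]
    (πX : X → B0) (πY : Y → B0) (f : X → Y) : Prop :=
  Continuous f ∧ ∀ x, πY (f x) = πX x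

/-- Two f.p. maps are f.p. homotopic (homotopic over `B0`). -/
def FPHomotopic {B0 X Y : Type u} [TopologicalSpace B0] [TopologicalSpace X] [TopologicalSpace Y]
    (πX : X → B0) (πY : Y → B0) (f g : X → Y) : Prop :=
  ∃ H : X × unitInterval → Y, Continuous H ∧
    (∀ x, H (x, 0) = f x) ∧ (∀ x, H (x, 1) = g x) ∧
    ∀ x t, πY (H (x, t)) = πX x

/-- A metrizable space `(Y, πY)` over `B0` is an absolute neighbourhood retract over `B0`:
for every closed f.p. embedding into a metrizable space over `B0` there is a neighbourhood of the
image and an f.p. retraction of that neighbourhood onto the image. -/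
def IsFiberANR (B0 : Type u) [TopologicalSpace B0] (Y : Type u) [TopologicalSpace Y]
    (πY : Y → B0) : Prop :=
  MetrizableSpace Y ∧ Continuous πY ∧
  ∀ (X : Type u) (_ : TopologicalSpace X), MetrizableSpace X →
    ∀ πX : X → B0, Continuous πX →
    ∀ i : Y → X, IsClosedEmbedding i → (∀ y, πX (i y) = πY y) →
    ∃ U : Set X, U ∈ nhdsSet (Set.range i) ∧
    ∃ r : U → X, Continuous r ∧ (∀ u : U, r u ∈ Set.range i) ∧
      (∀ u : U, πX (r u) = πX u) ∧ ∀ u : U, (u : X) ∈ Set.range i → r u = u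

/-- A metrizable space `(Y, πY)` over `B0` is an absolute neighbourhood extensor over `B0`. -/
def IsFiberANE (B0 : Type u) [TopologicalSpace B0] (Y : Type u) [TopologicalSpace Y]
    (πY : Y → B0) : Prop :=
  MetrizableSpace Y ∧ Continuous πY ∧
  ∀ (X : Type u) (_ : TopologicalSpace X), MetrizableSpace X →
    ∀ πX : X → B0, Continuous πX →
    ∀ A : Set X, IsClosed A →
    ∀ f : A → Y, Continuous f → (∀ a : A, πY (f a) = πX a) →
    ∃ U : Set X, U ∈ nhdsSet A ∧
    ∃ g : U → Y, Continuous g ∧ (∀ u : U, πY (g u) = πX u) ∧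
      ∀ (a : X) (ha : a ∈ A) (hu : a ∈ U), g ⟨a, hu⟩ = f ⟨a, ha⟩

/-- An open cover of a topological space. -/
def IsOpenCover {Y : Type u} [TopologicalSpace Y] (𝒰 : Set (Set Y)) : Prop :=
  (∀ V ∈ 𝒰, IsOpen V) ∧ ⋃₀ 𝒰 = Set.univ

/-- Two maps are `𝒰`-near. -/
def UNear {X Y : Type u} (𝒰 : Set (Set Y)) (f g : X → Y) : Prop :=
  ∀ x, ∃ V ∈ 𝒰, f x ∈ V ∧ g x ∈ V

/-- The (topological) weight of a space: the least cardinality of a basis of its topology. -/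
noncomputable def tweight (X : Type u) [TopologicalSpace X] : Cardinal.{u} :=
  sInf {c | ∃ B : Set (Set X), IsTopologicalBasis B ∧ Cardinal.mk B = c}

/-- An inverse system in `Top_{B0}`: a directed set of indices, spaces over `B0` and f.p.
bonding maps. -/
structure FibInvSys (B0 : Type u) [TopologicalSpace B0] : Type (u + 1) where
  Idx : Type u
  le : Idx → Idx → Prop
  le_refl : ∀ a, le a a
  le_trans : ∀ a b c, le a b → le b c → le a c
  directed : ∀ a b, ∃ c, le a c ∧ le b c
  obj : Idx → Type u
  topInst : ∀ a, TopologicalSpace (obj a)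
  proj : ∀ a, obj a → B0
  proj_cont : ∀ a, @Continuous _ _ (topInst a) _ (proj a)
  bond : ∀ a a', le a a' → obj a' → obj a
  bond_cont : ∀ a a' (h : le a a'), @Continuous _ _ (topInst a') (topInst a) (bond a a' h)
  bond_fp : ∀ a a' (h : le a a') (x : obj a'), proj a (bond a a' h x) = proj a' x
  bond_id : ∀ a (x : obj a), bond a a (le_refl a) x = x
  bond_comp : ∀ a a' a'' (h : le a a') (h' : le a' a'') (x : obj a''),
    bond a a' h (bond a' a'' h' x) = bond a a'' (le_trans a a' a'' h h') x

attribute [instance] FibInvSys.topInst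

/-- A morphism from a space `(X, πX)` over `B0` to an inverse system in `Top_{B0}`. -/
structure FibMapToSys {B0 : Type u} [TopologicalSpace B0] (X : Type u) [TopologicalSpace X]
    (πX : X → B0) (S : FibInvSys B0) where
  maps : ∀ a : S.Idx, X → S.obj a
  cont : ∀ a, Continuous (maps a)
  fp : ∀ a x, S.proj a (maps a x) = πX x
  comm : ∀ a a' (h : S.le a a') (x : X), S.bond a a' h (maps a' x) = maps a x

section Conditions

variable {B0 : Type u} [TopologicalSpace B0] (X : Type u) [TopologicalSpace X]
  (πX : X → B0) (S : FibInvSys B0)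

/-- Condition (R1) of a resolution over `B0`. -/
def CondR1 (p : FibMapToSys X πX S) : Prop :=
  ∀ (P : Type u) (_ : TopologicalSpace P) (πP : P → B0), IsFiberANR B0 P πP →
    ∀ 𝒰 : Set (Set P), IsOpenCover 𝒰 →
    ∀ h : X → P, IsFPMap πX πP h →
    ∃ (a : S.Idx) (f : S.obj a → P), IsFPMap (S.proj a) πP f ∧
      UNear 𝒰 h fun x => f (p.maps a x)

/-- Condition (R2) of a resolution over `B0`. -/
def CondR2 (p : FibMapToSys X πX S) : Prop :=
  ∀ (P : Type u) (_ : TopologicalSpace P) (πP : P → B0), IsFiberANR B0 P πP →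
    ∀ 𝒰 : Set (Set P), IsOpenCover 𝒰 →
    ∃ 𝒰' : Set (Set P), IsOpenCover 𝒰' ∧
      ∀ (a : S.Idx) (f f' : S.obj a → P), IsFPMap (S.proj a) πP f → IsFPMap (S.proj a) πP f' →
        UNear 𝒰' (fun x => f (p.maps a x)) (fun x => f' (p.maps a x)) →
        ∃ (a' : S.Idx) (h : S.le a a'),
          UNear 𝒰 (fun y => f (S.bond a a' h y)) fun y => f' (S.bond a a' h y)

/-- `p` is a resolution over `B0`. -/
def IsFibResolution (p : FibMapToSys X πX S) : Prop :=
  CondR1 X πX S p ∧ CondR2 X πX S p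

/-- Condition (E1) of an expansion over `B0`. -/
def CondE1 (p : FibMapToSys X πX S) : Prop :=
  ∀ (P : Type u) (_ : TopologicalSpace P) (πP : P → B0), IsFiberANR B0 P πP →
    ∀ f : X → P, IsFPMap πX πP f →
    ∃ (a : S.Idx) (h : S.obj a → P), IsFPMap (S.proj a) πP h ∧
      FPHomotopic πX πP (fun x => h (p.maps a x)) f

/-- Condition (E2) of an expansion over `B0`. -/
def CondE2 (p : FibMapToSys X πX S) : Prop :=
  ∀ (P : Type u) (_ : TopologicalSpace P) (πP : P → B0), IsFiberANR B0 P πP →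
    ∀ (a : S.Idx) (f f' : S.obj a → P), IsFPMap (S.proj a) πP f → IsFPMap (S.proj a) πP f' →
      FPHomotopic πX πP (fun x => f (p.maps a x)) (fun x => f' (p.maps a x)) →
      ∃ (a' : S.Idx) (h : S.le a a'),
        FPHomotopic (S.proj a') πP (fun y => f (S.bond a a' h y)) fun y => f' (S.bond a a' h y)

/-- Two f.p. homotopies `S, T : X × I → P` are f.p. homotopic rel `X × ∂I`. -/
def FPHomotopicRelEnds {P : Type u} [TopologicalSpace P] (πP : P → B0)
    (S T : X × unitInterval → P) : Prop :=
  ∃ G : (X × unitInterval) × unitInterval → P, Continuous G ∧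
    (∀ z, G (z, 0) = S z) ∧ (∀ z, G (z, 1) = T z) ∧
    (∀ z s, πP (G (z, s)) = πX z.1) ∧
    (∀ x s, G ((x, 0), s) = S (x, 0)) ∧ ∀ x s, G ((x, 1), s) = S (x, 1)

/-- Condition (SE2) of a strong expansion over `B0`. -/
def CondSE2 (p : FibMapToSys X πX S) : Prop :=
  ∀ (P : Type u) (_ : TopologicalSpace P) (πP : P → B0), IsFiberANR B0 P πP →
    ∀ (a : S.Idx) (f0 f1 : S.obj a → P), IsFPMap (S.proj a) πP f0 → IsFPMap (S.proj a) πP f1 →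
    ∀ Sh : X × unitInterval → P, Continuous Sh → (∀ x t, πP (Sh (x, t)) = πX x) →
      (∀ x, Sh (x, 0) = f0 (p.maps a x)) → (∀ x, Sh (x, 1) = f1 (p.maps a x)) →
      ∃ (a' : S.Idx) (h : S.le a a') (H : S.obj a' × unitInterval → P),
        Continuous H ∧ (∀ z t, πP (H (z, t)) = S.proj a' z) ∧
        (∀ z, H (z, 0) = f0 (S.bond a a' h z)) ∧
        (∀ z, H (z, 1) = f1 (S.bond a a' h z)) ∧
        FPHomotopicRelEnds X πX πP Sh fun zt => H (p.maps a' zt.1, zt.2)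

/-- `p` is a strong expansion over `B0`. -/
def IsFibStrongExpansion (p : FibMapToSys X πX S) : Prop :=
  CondE1 X πX S p ∧ CondSE2 X πX S p

end Conditions

open Metric Filter

theorem dugundji {X : Type*} {E : Type*} [MetricSpace X] [NormedAddCommGroup E]
    [NormedSpace ℝ E] {A : Set X} (hA : IsClosed A) (hne : A.Nonempty) (f : A → E)
    (hf : Continuous f) :
    ∃ g : X → E, Continuous g ∧ (∀ a : A, g a = f a) ∧
      ∀ x, g x ∈ convexHull ℝ (Set.range f) := by
  classical
  set D : X → ℝ := fun x => infDist x A with hD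
  have hDpos : ∀ x : ↥(Aᶜ), 0 < D x.1 := fun x =>
    (hA.notMem_iff_infDist_pos hne).1 x.2
  -- open cover of Aᶜ
  set U : ↥(Aᶜ) → Set ↥(Aᶜ) := fun i => {x | dist x.1 i.1 < D i.1 / 2} with hU
  have hUo : ∀ i, IsOpen (U i) := by
    intro i
    have : U i = Subtype.val ⁻¹' (ball i.1 (D i.1 / 2)) := rfl
    rw [this]
    exact isOpen_ball.preimage continuous_subtype_val
  have hUc : (univ : Set ↥(Aᶜ)) ⊆ ⋃ i, U i := by
    intro x _
    exact mem_iUnion.2 ⟨x, by simp [hU, (hDpos x)]⟩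
  obtain ⟨φ, hφ⟩ := PartitionOfUnity.exists_isSubordinate isClosed_univ U hUo hUc
  -- choose nearby points in A
  have hax : ∀ i : ↥(Aᶜ), ∃ a : A, dist i.1 a.1 < 2 * D i.1 := by
    intro i
    have : infDist i.1 A < 2 * D i.1 := by nlinarith [hDpos i]
    obtain ⟨a, haA, ha⟩ := (infDist_lt_iff hne).1 this
    exact ⟨⟨a, haA⟩, ha⟩
  choose a ha using hax
  set h : ↥(Aᶜ) → E := fun x => ∑ᶠ i, φ i x • f (a i) with hh
  have hhc : Continuous h :=
    hφ.continuous_finsum_smul hUo fun i => continuousOn_const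
  -- key estimate
  have hdist : ∀ (x : ↥(Aᶜ)) (i : ↥(Aᶜ)), φ i x ≠ 0 → ∀ b : A,
      dist (a i).1 b.1 ≤ 6 * dist x.1 b.1 := by
    intro x i hi b
    have hx : x ∈ U i := hφ i (subset_tsupport _ hi)
    have h1 : dist x.1 i.1 < D i.1 / 2 := hx
    have h2 : D i.1 ≤ D x.1 + dist i.1 x.1 := infDist_le_infDist_add_dist
    have h3 : D x.1 ≤ dist x.1 b.1 := infDist_le_dist_of_mem b.2
    have h4 : dist (a i).1 b.1 ≤ dist (a i).1 i.1 + dist i.1 x.1 + dist x.1 b.1 :=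
      dist_triangle4 _ _ _ _
    have h5 := ha i
    rw [dist_comm] at h1
    rw [dist_comm (a i).1 i.1] at h4
    nlinarith
  have hest : ∀ (x : ↥(Aᶜ)) (a₀ : A) (ε : ℝ),
      (∀ b : A, dist b.1 a₀.1 ≤ 6 * dist x.1 a₀.1 → ‖f b - f a₀‖ ≤ ε) →
      ‖h x - f a₀‖ ≤ ε := by
    intro x a₀ ε hyp
    have hsum1 : ∑ i ∈ φ.finsupport x, φ i x = 1 := φ.sum_finsupport (mem_univ x)
    have hrw : h x = ∑ i ∈ φ.finsupport x, φ i x • f (a i) :=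
      (φ.sum_finsupport_smul_eq_finsum fun i _ => f (a i)).symm
    have hsub : h x - f a₀ = ∑ i ∈ φ.finsupport x, φ i x • (f (a i) - f a₀) := by
      rw [hrw]
      simp only [smul_sub]
      rw [Finset.sum_sub_distrib, ← Finset.sum_smul, hsum1, one_smul]
    rw [hsub]
    calc ‖∑ i ∈ φ.finsupport x, φ i x • (f (a i) - f a₀)‖
        ≤ ∑ i ∈ φ.finsupport x, ‖φ i x • (f (a i) - f a₀)‖ := norm_sum_le _ _
      _ ≤ ∑ i ∈ φ.finsupport x, φ i x * ε := by
          apply Finset.sum_le_sum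
          intro i hi
          rw [norm_smul, Real.norm_eq_abs, abs_of_nonneg (φ.nonneg i x)]
          have hne0 : φ i x ≠ 0 := by
            rw [φ.mem_finsupport] at hi; exact hi
          have := hyp (a i) (hdist x i hne0 a₀)
          have hnn := φ.nonneg i x
          exact mul_le_mul_of_nonneg_left this hnn
      _ = ε := by rw [← Finset.sum_mul, hsum1, one_mul]
  set g : X → E := fun x => if hx : x ∈ A then f ⟨x, hx⟩ else h ⟨x, hx⟩ with hg
  have hres : ∀ x : ↥(Aᶜ), g x.1 = h x := by
    intro x
    simp only [hg]
    rw [dif_neg x.2]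
  refine ⟨g, ?_, ?_, ?_⟩
  · rw [continuous_iff_continuousAt]
    intro x₀
    by_cases hx₀ : x₀ ∈ A
    · -- continuity at points of A
      rw [Metric.continuousAt_iff]
      intro ε hε
      have hfc : ∀ ε' > 0, ∃ δ > 0, ∀ b : A, dist b.1 x₀ < δ → dist (f b) (f ⟨x₀, hx₀⟩) < ε' := by
        intro ε' hε'
        have := (Metric.continuous_iff.1 hf) ⟨x₀, hx₀⟩ ε' hε'
        obtain ⟨δ, hδ, hδ'⟩ := this
        exact ⟨δ, hδ, fun b hb => hδ' b (by rwa [Subtype.dist_eq])⟩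
      obtain ⟨δ, hδpos, hδ⟩ := hfc (ε / 2) (by linarith)
      refine ⟨δ / 6, by linarith, ?_⟩
      intro y hy
      have hgx₀ : g x₀ = f ⟨x₀, hx₀⟩ := by simp only [hg]; rw [dif_pos hx₀]
      by_cases hyA : y ∈ A
      · have : g y = f ⟨y, hyA⟩ := by simp only [hg]; rw [dif_pos hyA]
        rw [this, hgx₀]
        exact lt_trans (hδ ⟨y, hyA⟩ (lt_of_lt_of_le hy (by linarith))) (by linarith)
      · have : g y = h ⟨y, hyA⟩ := by simp only [hg]; rw [dif_neg hyA]
        rw [this, hgx₀, dist_eq_norm]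
        have : ‖h ⟨y, hyA⟩ - f ⟨x₀, hx₀⟩‖ ≤ ε / 2 := by
          apply hest ⟨y, hyA⟩ ⟨x₀, hx₀⟩
          intro b hb
          have : dist b.1 x₀ < δ := by
            have h6 : (6:ℝ) * dist y x₀ < 6 * (δ/6) := by
              have := hy; simp only [dist_comm] at this ⊢; nlinarith [this]
            calc dist b.1 x₀ ≤ 6 * dist y x₀ := hb
              _ < δ := by linarith
          have := hδ b this
          rw [dist_eq_norm] at this
          exact le_of_lt this
        linarith
    · -- continuity on the open set Aᶜ
      have hco : ContinuousOn g Aᶜ := by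
        rw [continuousOn_iff_continuous_restrict]
        have : (Aᶜ).domRestrict g = h := funext fun x => hres x
        rw [this]; exact hhc
      exact hco.continuousAt (hA.isOpen_compl.mem_nhds hx₀)
  · intro b
    simp only [hg]
    rw [dif_pos b.2]
  · intro x
    by_cases hx : x ∈ A
    · simp only [hg]
      rw [dif_pos hx]
      exact subset_convexHull ℝ _ (mem_range_self _)
    · simp only [hg]
      rw [dif_neg hx]
      set x' : ↥(Aᶜ) := ⟨x, hx⟩
      have hrw : h x' = ∑ i ∈ φ.finsupport x', φ i x' • f (a i) :=
        (φ.sum_finsupport_smul_eq_finsum fun i _ => f (a i)).symm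
      rw [hrw]
      exact (convex_convexHull ℝ _).sum_mem (fun i _ => φ.nonneg i x')
        (φ.sum_finsupport (mem_univ x'))
        (fun i _ => subset_convexHull ℝ _ (mem_range_self _))

/-- Kuratowski-type embedding of a metric space into bounded continuous functions. -/
noncomputable def kur {Y : Type u} [MetricSpace Y] (y₀ : Y) (y : Y) :
    BoundedContinuousFunction Y ℝ :=
  ⟨⟨fun z => dist y z - dist y₀ z, by fun_prop⟩, ⟨2 * dist y y₀, by
    intro z w
    rw [Real.dist_eq]
    have h1 : |dist y z - dist y₀ z| ≤ dist y y₀ := abs_dist_sub_le _ _ _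
    have h2 : |dist y w - dist y₀ w| ≤ dist y y₀ := abs_dist_sub_le _ _ _
    have := abs_sub (dist y z - dist y₀ z) (dist y w - dist y₀ w)
    calc |dist y z - dist y₀ z - (dist y w - dist y₀ w)|
        ≤ |dist y z - dist y₀ z| + |dist y w - dist y₀ w| := abs_sub _ _
      _ ≤ 2 * dist y y₀ := by linarith⟩⟩

theorem kur_apply {Y : Type u} [MetricSpace Y] (y₀ y z : Y) :
    kur y₀ y z = dist y z - dist y₀ z := rfl

theorem kur_isometry {Y : Type u} [MetricSpace Y] (y₀ : Y) : Isometry (kur y₀) := by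
  apply Isometry.of_dist_eq
  intro y y'
  apply le_antisymm
  · apply (BoundedContinuousFunction.dist_le dist_nonneg).2
    intro z
    rw [Real.dist_eq, kur_apply, kur_apply]
    have := abs_dist_sub_le y y' z
    calc |dist y z - dist y₀ z - (dist y' z - dist y₀ z)| = |dist y z - dist y' z| := by
          ring_nf
      _ ≤ dist y y' := abs_dist_sub_le _ _ _
  · have := BoundedContinuousFunction.dist_coe_le_dist (f := kur y₀ y) (g := kur y₀ y') y'
    rw [Real.dist_eq, kur_apply, kur_apply] at this
    simpa [dist_comm] using this

/-- Wojdysławski's lemma: the image of the Kuratowski-type embedding is closed in its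
convex hull. -/
theorem woj {Y : Type u} [MetricSpace Y] (y₀ : Y) {c : BoundedContinuousFunction Y ℝ}
    (hcl : c ∈ closure (Set.range (kur y₀))) (hcv : c ∈ convexHull ℝ (Set.range (kur y₀))) :
    c ∈ Set.range (kur y₀) := by
  classical
  rw [convexHull_eq] at hcv
  obtain ⟨ι, t, w, z, hw0, hw1, hz, hc⟩ := hcv
  -- a strictly positive weight
  obtain ⟨i₀, hi₀t, hi₀⟩ : ∃ i ∈ t, 0 < w i := by
    by_contra h
    push_neg at h
    have : ∑ i ∈ t, w i = 0 := Finset.sum_eq_zero fun i hi => le_antisymm (h i hi) (hw0 i hi)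
    rw [hw1] at this; norm_num at this
  -- representatives
  have hv : ∀ i ∈ t, ∃ v : Y, kur y₀ v = z i := fun i hi => hz i hi
  set v : ι → Y := fun i => if hi : i ∈ t then (hv i hi).choose else y₀ with hvdef
  have hvz : ∀ i ∈ t, kur y₀ (v i) = z i := by
    intro i hi
    simp only [hvdef, dif_pos hi]
    exact (hv i hi).choose_spec
  -- approximating sequence
  obtain ⟨x, hx, hxc⟩ := mem_closure_iff_seq_limit.1 hcl
  choose y hy using hx
  have hε : Tendsto (fun n => dist (x n) c) atTop (𝓝 0) :=
    tendsto_iff_dist_tendsto_zero.1 hxc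
  -- evaluate the center of mass
  have hceval : ∀ p : Y, c p = ∑ i ∈ t, w i * (z i p) := by
    intro p
    rw [← hc, Finset.centerMass_eq_of_sum_1 _ _ hw1]
    simp
  have hkey : ∀ n, w i₀ * dist (v i₀) (y n) ≤ dist (x n) c := by
    intro n
    have h1 : |c (y n) - x n (y n)| ≤ dist (x n) c := by
      have := BoundedContinuousFunction.dist_coe_le_dist (f := c) (g := x n) (y n)
      rw [Real.dist_eq, dist_comm c (x n)] at this
      exact this
    have h2 : x n (y n) = - dist y₀ (y n) := by
      rw [← hy n, kur_apply]; simp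
    have h3 : c (y n) = (∑ i ∈ t, w i * dist (v i) (y n)) - dist y₀ (y n) := by
      rw [hceval (y n)]
      have : ∀ i ∈ t, w i * z i (y n) = w i * dist (v i) (y n) - w i * dist y₀ (y n) := by
        intro i hi
        rw [← hvz i hi, kur_apply]; ring
      rw [Finset.sum_congr rfl this, Finset.sum_sub_distrib, ← Finset.sum_mul, hw1, one_mul]
    have h4 : |∑ i ∈ t, w i * dist (v i) (y n)| ≤ dist (x n) c := by
      have : c (y n) - x n (y n) = ∑ i ∈ t, w i * dist (v i) (y n) := by
        rw [h2, h3]; ring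
      rwa [this] at h1
    have h5 : w i₀ * dist (v i₀) (y n) ≤ ∑ i ∈ t, w i * dist (v i) (y n) := by
      apply Finset.single_le_sum (f := fun i => w i * dist (v i) (y n)) _ hi₀t
      intro i hi
      exact mul_nonneg (hw0 i hi) dist_nonneg
    calc w i₀ * dist (v i₀) (y n) ≤ ∑ i ∈ t, w i * dist (v i) (y n) := h5
      _ ≤ |∑ i ∈ t, w i * dist (v i) (y n)| := le_abs_self _
      _ ≤ dist (x n) c := h4
  -- conclude y n → v i₀
  have hyt : Tendsto y atTop (𝓝 (v i₀)) := by
    rw [tendsto_iff_dist_tendsto_zero]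
    have hub : ∀ n, dist (y n) (v i₀) ≤ (w i₀)⁻¹ * dist (x n) c := by
      intro n
      rw [dist_comm]
      rw [← mul_le_mul_iff_right₀ hi₀]
      calc w i₀ * dist (v i₀) (y n) ≤ dist (x n) c := hkey n
        _ = w i₀ * ((w i₀)⁻¹ * dist (x n) c) := by field_simp
    have : Tendsto (fun n => (w i₀)⁻¹ * dist (x n) c) atTop (𝓝 0) := by
      have := hε.const_mul (w i₀)⁻¹
      simpa using this
    exact squeeze_zero (fun n => dist_nonneg) hub this
  have : Tendsto x atTop (𝓝 (kur y₀ (v i₀))) := by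
    have hk : Tendsto (fun n => kur y₀ (y n)) atTop (𝓝 (kur y₀ (v i₀))) :=
      ((kur_isometry y₀).continuous.tendsto _).comp hyt
    simpa only [hy] using hk
  exact ⟨v i₀, tendsto_nhds_unique this hxc⟩

set_option maxHeartbeats 1000000 in
set_option synthInstance.maxHeartbeats 400000 in
theorem fiberANE_of_fiberANR {B0 : Type u} [TopologicalSpace B0] [MetrizableSpace B0]
    {Y : Type u} [TopologicalSpace Y] {πY : Y → B0} (hY : IsFiberANR B0 Y πY) :
    IsFiberANE B0 Y πY := by
  obtain ⟨hmY, hπY, hANR⟩ := hY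
  refine ⟨hmY, hπY, ?_⟩
  intro X tX mX πX hπX A hA f hf hfp
  rcases A.eq_empty_or_nonempty with rfl | hAne
  · haveI : IsEmpty ↥(∅ : Set X) := ⟨fun u => notMem_empty _ u.2⟩
    refine ⟨∅, by rw [nhdsSet_empty]; exact Filter.mem_bot,
      fun u => isEmptyElim u, ?_, fun u => isEmptyElim u, fun a ha hu => isEmptyElim (⟨a, hu⟩ : ↥(∅ : Set X))⟩
    exact continuous_iff_continuousAt.2 fun u => isEmptyElim u
  haveI := hmY
  haveI := mX
  letI : MetricSpace Y := TopologicalSpace.metrizableSpaceMetric Y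
  letI : MetricSpace X := TopologicalSpace.metrizableSpaceMetric X
  letI : MetricSpace B0 := TopologicalSpace.metrizableSpaceMetric B0
  obtain ⟨a₀, ha₀⟩ := hAne
  set y₀ : Y := f ⟨a₀, ha₀⟩ with hy₀
  set κ : Y → BoundedContinuousFunction Y ℝ := kur y₀ with hκdef
  have hκ : Isometry κ := kur_isometry y₀
  set K : Set (BoundedContinuousFunction Y ℝ) := Set.range κ with hK
  set Wc : Set (B0 × BoundedContinuousFunction Y ℝ) := {p | p.2 ∈ convexHull ℝ K} with hWc
  set πW : ↥Wc → B0 := fun w => w.1.1 with hπW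
  have hπWc : Continuous πW := continuous_fst.comp continuous_subtype_val
  set j : Y → ↥Wc := fun y =>
    ⟨(πY y, κ y), subset_convexHull ℝ K (mem_range_self y)⟩ with hj
  have hjc : Continuous j := (hπY.prodMk hκ.continuous).subtype_mk _
  have hemb : IsEmbedding j := by
    apply IsEmbedding.of_comp hjc (continuous_snd.comp continuous_subtype_val)
    exact (hκ.isEmbedding : IsEmbedding ((fun w : ↥Wc => w.1.2) ∘ j))
  have hclosed : IsClosed (Set.range j) := by
    apply IsSeqClosed.isClosed
    intro u w hu hw
    choose y hy using hu
    have hκt : Filter.Tendsto (fun n => κ (y n)) Filter.atTop (𝓝 w.1.2) := by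
      have h1 : Filter.Tendsto (fun n => (u n).1.2) Filter.atTop (𝓝 w.1.2) :=
        ((continuous_snd.comp continuous_subtype_val).tendsto w).comp hw
      have h2 : (fun n => (u n).1.2) = fun n => κ (y n) := by
        funext n; rw [← hy n]
      rwa [h2] at h1
    have hwcl : w.1.2 ∈ closure K :=
      mem_closure_of_tendsto hκt (Filter.Eventually.of_forall fun n => mem_range_self _)
    obtain ⟨ylim, hyl⟩ : w.1.2 ∈ K := woj y₀ hwcl w.2
    have hyt : Filter.Tendsto y Filter.atTop (𝓝 ylim) := by
      rw [hκ.isEmbedding.tendsto_nhds_iff]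
      show Filter.Tendsto (fun n => κ (y n)) Filter.atTop (𝓝 (κ ylim))
      rwa [hyl]
    have hb1 : Filter.Tendsto (fun n => πY (y n)) Filter.atTop (𝓝 (πY ylim)) :=
      (hπY.tendsto _).comp hyt
    have hb2 : Filter.Tendsto (fun n => πY (y n)) Filter.atTop (𝓝 w.1.1) := by
      have h1 : Filter.Tendsto (fun n => (u n).1.1) Filter.atTop (𝓝 w.1.1) :=
        ((continuous_fst.comp continuous_subtype_val).tendsto w).comp hw
      have h2 : (fun n => (u n).1.1) = fun n => πY (y n) := by
        funext n; rw [← hy n]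
      rwa [h2] at h1
    refine ⟨ylim, Subtype.ext (Prod.ext ?_ hyl)⟩
    exact tendsto_nhds_unique hb1 hb2
  obtain ⟨U', hU', r, hrc, hrr, hrfp, hrid⟩ :=
    hANR ↥Wc inferInstance inferInstance πW hπWc j ⟨hemb, hclosed⟩ (fun y => rfl)
  obtain ⟨V', hV'o, hV'sub, hV'U⟩ := mem_nhdsSet_iff_exists.1 hU'
  -- Dugundji extension of κ ∘ f
  obtain ⟨G, hGc, hGa, hGhull⟩ := dugundji hA ⟨a₀, ha₀⟩ (fun a => κ (f a))
    (hκ.continuous.comp hf)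
  have hGC : ∀ x, G x ∈ convexHull ℝ K := by
    intro x
    refine convexHull_mono ?_ (hGhull x)
    rintro _ ⟨a, rfl⟩
    exact mem_range_self _
  set Ψ : X → ↥Wc := fun x => ⟨(πX x, G x), hGC x⟩ with hΨ
  have hΨc : Continuous Ψ := (hπX.prodMk hGc).subtype_mk _
  have hΨA : ∀ a : A, Ψ a = j (f a) := by
    intro a
    apply Subtype.ext
    exact Prod.ext (hfp a).symm (hGa a)
  set U : Set X := Ψ ⁻¹' V' with hUdef
  have hUopen : IsOpen U := hV'o.preimage hΨc
  have hAU : A ⊆ U := by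
    intro x hx
    show Ψ x ∈ V'
    rw [hΨA ⟨x, hx⟩]
    exact hV'sub (mem_range_self _)
  set homj := Topology.IsEmbedding.toHomeomorph hemb with hhomj
  set g : ↥U → Y := fun u =>
    homj.symm ⟨r ⟨Ψ u.1, hV'U u.2⟩, hrr _⟩ with hgdef
  have hjg : ∀ u : ↥U, j (g u) = r ⟨Ψ u.1, hV'U u.2⟩ := by
    intro u
    have := homj.apply_symm_apply ⟨r ⟨Ψ u.1, hV'U u.2⟩, hrr _⟩
    exact congrArg Subtype.val this
  refine ⟨U, hUopen.mem_nhdsSet.2 hAU, g, ?_, ?_, ?_⟩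
  · apply homj.symm.continuous.comp
    apply Continuous.subtype_mk
    exact hrc.comp ((hΨc.comp continuous_subtype_val).subtype_mk _)
  · intro u
    have h1 : πY (g u) = πW (j (g u)) := rfl
    rw [h1, hjg u, hrfp ⟨Ψ u.1, hV'U u.2⟩]
  · intro a ha hu
    have hmem : (⟨Ψ a, hV'U hu⟩ : ↥U').1 ∈ Set.range j := by
      show Ψ a ∈ Set.range j
      rw [hΨA ⟨a, ha⟩]; exact mem_range_self _
    have hre : r ⟨Ψ a, hV'U hu⟩ = Ψ a := hrid _ hmem
    have : j (g ⟨a, hu⟩) = j (f ⟨a, ha⟩) := by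
      rw [hjg ⟨a, hu⟩]
      show r ⟨Ψ a, hV'U hu⟩ = j (f ⟨a, ha⟩)
      rw [hre, hΨA ⟨a, ha⟩]
    exact hemb.injective this

set_option maxHeartbeats 1000000 in
set_option synthInstance.maxHeartbeats 400000 in
/-- Proposition 0.5: if `Y` is an `ANR_{B0}`-space and `Z` is a compact metric space, then the
space `C_{B0}(Z, Y)` of maps `Z → Y` whose composition with `πY` is constant, with the
compact-open topology and the projection `f ↦ πY (f z)`, is an `ANR_{B0}`-space. -/
theorem fiberANR_continuousMapSpace (B0 : Type u) [TopologicalSpace B0] [MetrizableSpace B0]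
    (Y : Type u) [TopologicalSpace Y] (πY : Y → B0) (hY : IsFiberANR B0 Y πY)
    (Z : Type u) [MetricSpace Z] [CompactSpace Z] [Nonempty Z] :
    IsFiberANR B0 {f : C(Z, Y) // ∀ z z' : Z, πY (f z) = πY (f z')}
      (fun f => πY (f.1 (Classical.arbitrary Z))) := by
  obtain ⟨hmY, hπY, -⟩ := id hY
  have hANE := fiberANE_of_fiberANR hY
  haveI := hmY
  letI : MetricSpace Y := TopologicalSpace.metrizableSpaceMetric Y
  refine ⟨inferInstance, hπY.comp ((continuous_eval_const
    (Classical.arbitrary Z)).comp continuous_subtype_val), ?_⟩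
  intro X tX mX πX hπX i hi hifp
  haveI := mX
  set invi := (Topology.IsEmbedding.toHomeomorph hi.isEmbedding).symm with hinvi
  have hiinvi : ∀ w : ↥(Set.range i), i (invi w) = w.1 := fun w =>
    congrArg Subtype.val ((Topology.IsEmbedding.toHomeomorph hi.isEmbedding).apply_symm_apply w)
  set A : Set (X × Z) := (Set.range i) ×ˢ (univ : Set Z) with hAdef
  have hAc : IsClosed A := hi.isClosed_range.prod isClosed_univ
  set e : ↥A → Y := fun p => (invi ⟨p.1.1, p.2.1⟩).1.1 p.1.2 with he
  have hec : Continuous e := by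
    have h1 : Continuous fun p : ↥A => invi ⟨p.1.1, p.2.1⟩ :=
      (Topology.IsEmbedding.toHomeomorph hi.isEmbedding).symm.continuous.comp
        (((continuous_fst.comp continuous_subtype_val).comp continuous_id).subtype_mk _)
    have h2 : Continuous fun p : ↥A => ((invi ⟨p.1.1, p.2.1⟩).1 : C(Z, Y)) :=
      continuous_subtype_val.comp h1
    have h3 : Continuous fun p : ↥A => p.1.2 := continuous_snd.comp continuous_subtype_val
    exact continuous_eval.comp (h2.prodMk h3)
  have hefp : ∀ p : ↥A, πY (e p) = πX p.1.1 := by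
    intro p
    have h1 : πY ((invi ⟨p.1.1, p.2.1⟩).1.1 p.1.2) =
        πY ((invi ⟨p.1.1, p.2.1⟩).1.1 (Classical.arbitrary Z)) :=
      (invi ⟨p.1.1, p.2.1⟩).2 _ _
    have h2 := hifp (invi ⟨p.1.1, p.2.1⟩)
    rw [hiinvi ⟨p.1.1, p.2.1⟩] at h2
    rw [he]
    simp only []
    rw [h1, h2]
    rfl
  obtain ⟨U₁, hU₁, g, hgc, hgfp, hgext⟩ := hANE.2.2 (X × Z) inferInstance inferInstance
    (fun q => πX q.1) (hπX.comp continuous_fst) A hAc e hec hefp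
  obtain ⟨O, hOo, hAO, hOU⟩ := mem_nhdsSet_iff_exists.1 hU₁
  set U : Set X := (Prod.fst '' Oᶜ)ᶜ with hUdef
  have hUo : IsOpen U := (isClosedMap_fst_of_compactSpace _ hOo.isClosed_compl).isOpen_compl
  have hUZ : ∀ x ∈ U, ∀ z : Z, (x, z) ∈ O := by
    intro x hx z
    by_contra h
    exact hx ⟨(x, z), h, rfl⟩
  have hranU : Set.range i ⊆ U := by
    rintro x hxr ⟨q, hq, hq1⟩
    exact hq (hAO ⟨by rw [hq1]; exact hxr, trivial⟩)
  have hmemU₁ : ∀ (u : ↥U) (z : Z), ((u : X), z) ∈ U₁ := fun u z => hOU (hUZ u.1 u.2 z)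
  set mapC : C(↥U × Z, Y) :=
    ⟨fun p => g ⟨(p.1.1, p.2), hmemU₁ p.1 p.2⟩, by
      apply hgc.comp
      exact (((continuous_subtype_val.comp continuous_fst).prodMk
        continuous_snd).subtype_mk _)⟩ with hmapC
  set curried : C(↥U, C(Z, Y)) := ContinuousMap.curry mapC with hcurried
  have hcprop : ∀ (u : ↥U) (z z' : Z), πY (curried u z) = πY (curried u z') := by
    intro u z z'
    have h1 : πY (g ⟨((u : X), z), hmemU₁ u z⟩) = πX (u : X) := hgfp _
    have h2 : πY (g ⟨((u : X), z'), hmemU₁ u z'⟩) = πX (u : X) := hgfp _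
    show πY (g ⟨((u : X), z), hmemU₁ u z⟩) = πY (g ⟨((u : X), z'), hmemU₁ u z'⟩)
    rw [h1, h2]
  set cu : ↥U → {f : C(Z, Y) // ∀ z z' : Z, πY (f z) = πY (f z')} :=
    fun u => ⟨curried u, hcprop u⟩ with hcu
  have hcuc : Continuous cu := curried.continuous.subtype_mk _
  refine ⟨U, hUo.mem_nhdsSet.2 hranU, fun u => i (cu u), hi.continuous.comp hcuc,
    fun u => mem_range_self _, ?_, ?_⟩
  · intro u
    have h2 := hifp (cu u)
    rw [h2]
    exact hgfp ⟨((u : X), Classical.arbitrary Z), hmemU₁ u _⟩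
  · rintro u ⟨f₀, hf₀⟩
    have hcuf : cu u = f₀ := by
      apply Subtype.ext
      apply ContinuousMap.ext
      intro z
      have hmemA : ((u : X), z) ∈ A := ⟨⟨f₀, hf₀⟩, trivial⟩
      have h1 : g ⟨((u : X), z), hmemU₁ u z⟩ = e ⟨((u : X), z), hmemA⟩ :=
        hgext _ hmemA (hmemU₁ u z)
      have h2 : invi ⟨((u : X), z).1, hmemA.1⟩ = f₀ := by
        apply hi.injective
        rw [hiinvi]
        exact hf₀.symm
      show g ⟨((u : X), z), hmemU₁ u z⟩ = f₀.1 z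
      rw [h1, he]
      simp only []
      rw [h2]
      rfl
    show i (cu u) = (u : X)
    rw [hcuf]
    exact hf₀
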